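/- Let m, n ≥ 1 be integers with not both m = 2 and n = 2, and set Δ = 3mn - 4(m+n-1). Then Δ ≠ 0, the distance matrix D(K_{m,n}) is invertible, and its inverse M has entries: M_{ii} = (3n-4)/(2Δ) - 1/2 for i in V_1; M_{ij} = (3n-4)/(2Δ) for distinct i, j in V_1; M_{ii} = (3m-4)/(2Δ) - 1/2 for i in V_2; M_{ij} = (3m-4)/(2Δ) for distinct i, j in V_2; and M_{ij} = -1/Δ whenever i and j lie in different parts. -/

import Mathlib

private lemma sum_split_aux (m n : ℕ) (C E : ℝ) :
    ∑ k : Fin (m+n), (if (k:ℕ) < m then C else E) = m * C + n * E := by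
  rw [Fin.sum_univ_eq_sum_range (fun x => if x < m then C else E)]
  rw [Finset.range_add, Finset.sum_union (by simp [Finset.disjoint_left]; omega),
    Finset.sum_map]
  rw [Finset.sum_congr rfl (fun x hx => if_pos (Finset.mem_range.mp hx))]
  simp [mul_comm]

private lemma sum_one_delta (m n : ℕ) (f : Fin (m+n) → ℝ) (i : Fin (m+n)) (C E ci : ℝ)
    (hf : ∀ k, f k = (if (k:ℕ) < m then C else E) + (if k = i then ci else 0)) :
    ∑ k, f k = m * C + n * E + ci := by
  rw [Finset.sum_congr rfl (fun k _ => hf k), Finset.sum_add_distrib, sum_split_aux]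
  simp

private lemma sum_two_delta (m n : ℕ) (f : Fin (m+n) → ℝ) (i j : Fin (m+n))
    (C E ci cj : ℝ)
    (hf : ∀ k, f k = (if (k:ℕ) < m then C else E) + (if k = i then ci else 0)
      + (if k = j then cj else 0)) :
    ∑ k, f k = m * C + n * E + ci + cj := by
  rw [Finset.sum_congr rfl (fun k _ => hf k), Finset.sum_add_distrib,
    Finset.sum_add_distrib, sum_split_aux]
  simp

/-- Let `m, n ≥ 1` with not both equal to `2`, and set `Δ = 3mn - 4(m+n-1)`. Then
`Δ ≠ 0`, the distance matrix of `K_{m,n}` is invertible, and its inverse is the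
explicitly given matrix `M`. Vertices are `Fin (m+n)`; the part `V₁` consists of
indices `< m`. -/
theorem inv_distanceMatrix_Kmn (m n : ℕ) (hm : 1 ≤ m) (hn : 1 ≤ n)
    (hmn : ¬(m = 2 ∧ n = 2))
    (Δ : ℝ) (hΔ : Δ = 3 * (m : ℝ) * n - 4 * ((m : ℝ) + n - 1))
    (D M : Matrix (Fin (m + n)) (Fin (m + n)) ℝ)
    (hD : ∀ i j : Fin (m + n), D i j =
      if i = j then 0 else if (i.val < m ↔ j.val < m) then 2 else 1)
    (hM : ∀ i j : Fin (m + n), M i j =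
      if i.val < m ∧ j.val < m then
        (if i = j then (3 * (n : ℝ) - 4) / (2 * Δ) - 1 / 2
         else (3 * (n : ℝ) - 4) / (2 * Δ))
      else if ¬ i.val < m ∧ ¬ j.val < m then
        (if i = j then (3 * (m : ℝ) - 4) / (2 * Δ) - 1 / 2
         else (3 * (m : ℝ) - 4) / (2 * Δ))
      else -1 / Δ) :
    Δ ≠ 0 ∧ IsUnit D ∧ D⁻¹ = M := by
  have hΔ0 : Δ ≠ 0 := by
    have h : Δ = ((3 * m * n - 4 * (m + n) + 4 : ℤ) : ℝ) := by push_cast; rw [hΔ]; ring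
    rw [h]
    have : (3 * (m:ℤ) * n - 4 * (m + n) + 4) ≠ 0 := by
      rcases Nat.lt_or_ge m 3 with h1 | h1
      · interval_cases m
        · omega
        · have : n ≠ 2 := fun h => hmn ⟨rfl, h⟩
          omega
      rcases Nat.lt_or_ge n 3 with h2 | h2
      · interval_cases n
        · omega
        · have : m ≠ 2 := fun h => hmn ⟨h, rfl⟩
          omega
      have h1' : (3:ℤ) ≤ m := by exact_mod_cast h1
      have h2' : (3:ℤ) ≤ n := by exact_mod_cast h2
      nlinarith [mul_nonneg (sub_nonneg.mpr h1') (sub_nonneg.mpr h2')]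
    exact_mod_cast this
  set a : ℝ := (3 * (n : ℝ) - 4) / (2 * Δ) with ha
  set b : ℝ := (3 * (m : ℝ) - 4) / (2 * Δ) with hb
  set c : ℝ := -1 / Δ with hc
  have hDM : D * M = 1 := by
    ext i j
    rw [Matrix.mul_apply]
    by_cases hi : (i:ℕ) < m <;> by_cases hj : (j:ℕ) < m <;>
      rcases eq_or_ne i j with hij | hij
    -- case 1: i = j, both < m
    · subst hij
      have hf : ∀ k, D i k * M k i =
          (if (k:ℕ) < m then 2 * a else c) + (if k = i then -(2 * a) else 0) := by
        intro k
        by_cases h1 : k = i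
        · subst h1; simp [hD, hM, hi]
        · by_cases hk : (k:ℕ) < m <;>
            simp [hD, hM, hi, hk, h1, Ne.symm h1]
      rw [sum_one_delta m n _ i _ _ _ hf]
      simp only [Matrix.one_apply_eq, ha, hc]
      field_simp
      rw [hΔ]; ring
    -- case 2: i ≠ j, both < m
    · have hf : ∀ k, D i k * M k j =
          (if (k:ℕ) < m then 2 * a else c) + (if k = i then -(2 * a) else 0)
          + (if k = j then -1 else 0) := by
        intro k
        by_cases h1 : k = i
        · subst h1; simp [hD, hM, hi, hj, hij]
        · by_cases h2 : k = j
          · subst h2; simp [hD, hM, hi, hj, h1, Ne.symm h1]; ring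
          · by_cases hk : (k:ℕ) < m <;>
              simp [hD, hM, hi, hj, hk, h1, h2, Ne.symm h1, Ne.symm h2]
      rw [sum_two_delta m n _ i j _ _ _ _ hf]
      simp only [Matrix.one_apply_ne hij, ha, hc]
      field_simp
      rw [hΔ]; ring
    -- case 3: i = j impossible (i < m, j not)
    · exact absurd (hij ▸ hi) hj
    -- case 3': i < m, j ≥ m
    · have hf : ∀ k, D i k * M k j =
          (if (k:ℕ) < m then 2 * c else b) + (if k = i then -(2 * c) else 0)
          + (if k = j then -(1/2) else 0) := by
        intro k
        by_cases h1 : k = i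
        · subst h1; simp [hD, hM, hi, hj, hij]
        · by_cases h2 : k = j
          · subst h2; simp [hD, hM, hi, hj, h1, Ne.symm h1]; ring
          · by_cases hk : (k:ℕ) < m <;>
              simp [hD, hM, hi, hj, hk, h1, h2, Ne.symm h1, Ne.symm h2]
      rw [sum_two_delta m n _ i j _ _ _ _ hf]
      simp only [Matrix.one_apply_ne hij, hb, hc]
      field_simp
      rw [hΔ]; ring
    -- case 4: i = j impossible (i ≥ m, j < m)
    · exact absurd (hij ▸ hi) (by simpa [hij] using hj)
    -- case 4': i ≥ m, j < m
    · have hf : ∀ k, D i k * M k j =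
          (if (k:ℕ) < m then a else 2 * c) + (if k = i then -(2 * c) else 0)
          + (if k = j then -(1/2) else 0) := by
        intro k
        by_cases h1 : k = i
        · subst h1; simp [hD, hM, hi, hj, hij]
        · by_cases h2 : k = j
          · subst h2; simp [hD, hM, hi, hj, h1, Ne.symm h1]; ring
          · by_cases hk : (k:ℕ) < m <;>
              simp [hD, hM, hi, hj, hk, h1, h2, Ne.symm h1, Ne.symm h2]
      rw [sum_two_delta m n _ i j _ _ _ _ hf]
      simp only [Matrix.one_apply_ne hij, ha, hc]
      field_simp
      rw [hΔ]; ring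
    -- case 5: i = j, both ≥ m
    · subst hij
      have hf : ∀ k, D i k * M k i =
          (if (k:ℕ) < m then c else 2 * b) + (if k = i then -(2 * b) else 0) := by
        intro k
        by_cases h1 : k = i
        · subst h1; simp [hD, hM, hi]
        · by_cases hk : (k:ℕ) < m <;>
            simp [hD, hM, hi, hk, h1, Ne.symm h1]
      rw [sum_one_delta m n _ i _ _ _ hf]
      simp only [Matrix.one_apply_eq, hb, hc]
      field_simp
      rw [hΔ]; ring
    -- case 6: i ≠ j, both ≥ m
    · have hf : ∀ k, D i k * M k j =
          (if (k:ℕ) < m then c else 2 * b) + (if k = i then -(2 * b) else 0)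
          + (if k = j then -1 else 0) := by
        intro k
        by_cases h1 : k = i
        · subst h1; simp [hD, hM, hi, hj, hij]
        · by_cases h2 : k = j
          · subst h2; simp [hD, hM, hi, hj, h1, Ne.symm h1]; ring
          · by_cases hk : (k:ℕ) < m <;>
              simp [hD, hM, hi, hj, hk, h1, h2, Ne.symm h1, Ne.symm h2]
      rw [sum_two_delta m n _ i j _ _ _ _ hf]
      simp only [Matrix.one_apply_ne hij, hb, hc]
      field_simp
      rw [hΔ]; ring
  refine ⟨hΔ0, ?_, Matrix.inv_eq_right_inv hDM⟩
  exact (Matrix.isUnit_iff_isUnit_det D).mpr (Matrix.isUnit_det_of_right_inverse hDM)
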